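/- Let q be a prime power and let M be a simple and cosimple GF(q)-representable matroid that has two distinct loose elements. Then r(M) ≤ 2q. -/

import Mathlib

namespace LoosePaper

open Set
open scoped Matroid

variable {α β : Type*}

/-- A circuit of a matroid: a minimal dependent set. -/
def Circuit (M : Matroid α) (C : Set α) : Prop :=
  M.Dep C ∧ ∀ D, M.Dep D → D ⊆ C → D = C

/-- The rank of a matroid: the (common) cardinality of its bases. -/
noncomputable def rank (M : Matroid α) : ℕ :=
  sInf {n | ∃ B, M.IsBase B ∧ B.ncard = n}

/-- An element is loose if every circuit containing it has size at least the rank. -/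
def Loose (M : Matroid α) (e : α) : Prop :=
  e ∈ M.E ∧ ∀ C, Circuit M C → e ∈ C → rank M ≤ C.ncard

/-- An element is free if every circuit containing it is spanning. -/
def FreeElt (M : Matroid α) (e : α) : Prop :=
  e ∈ M.E ∧ ∀ C, Circuit M C → e ∈ C → M.closure C = M.E

/-- A coloop: an element contained in every base. -/
def Coloop (M : Matroid α) (e : α) : Prop :=
  e ∈ M.E ∧ ∀ B, M.IsBase B → e ∈ B

def NoColoops (M : Matroid α) : Prop := ∀ e, ¬ Coloop M e

/-- A matroid is simple if every pair of its elements is independent. -/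
def Simple (M : Matroid α) : Prop :=
  ∀ e ∈ M.E, ∀ f ∈ M.E, M.Indep {e, f}

/-- A matroid is paving if every circuit has size at least the rank. -/
def Paving (M : Matroid α) : Prop :=
  ∀ C, Circuit M C → rank M ≤ C.ncard

/-- `M` is representable over the field `F`. -/
def Representable (M : Matroid α) (F : Type*) [Field F] : Prop :=
  ∃ (ι : Type) (v : α → ι → F),
    ∀ I, I ⊆ M.E → (M.Indep I ↔ LinearIndependent F (fun x : I => v x.1))

/-- `N` is the vector matroid, on ground set all of `η`, of the matrix whose
column labelled by `c : η` is `A c`. -/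
def IsVectorMatroidOn (F : Type*) [Field F] {η ι : Type*} (A : η → ι → F)
    (N : Matroid η) : Prop :=
  N.E = Set.univ ∧ ∀ I : Set η, (N.Indep I ↔ LinearIndependent F (fun x : I => A x.1))

/-- `φ` is an isomorphism from `M` to `N`. -/
def IsIsoTo (M : Matroid α) (N : Matroid β) (φ : α → β) : Prop :=
  Set.BijOn φ M.E N.E ∧ ∀ I, I ⊆ M.E → (M.Indep I ↔ N.Indep (φ '' I))

/-- The matrix `[I_r | D]` of the matroid `M_r`; the column `Sum.inl i` is the
`i`-th standard basis vector, the column `Sum.inr 0` (the distinguished element `z`)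
is the all-ones vector, and for `1 ≤ j ≤ r-1` the column `Sum.inr j` has ones
exactly in rows `0` and `j` (`0`-indexed). -/
def MrMatrix (r : ℕ) : (Fin r ⊕ Fin r) → Fin r → ZMod 2
  | Sum.inl i => fun k => if k = i then 1 else 0
  | Sum.inr j => fun k =>
      if j.val = 0 then 1 else if k.val = 0 ∨ k = j then 1 else 0

/-- The matrix `[I_r | D]` of the matroid `N_r`; the column `Sum.inr 0`
(the distinguished element `z`) is `(0,1,…,1)ᵀ`, and for `1 ≤ j ≤ r-2` the column
`Sum.inr j` has ones exactly in rows `0`, `1` and `j+1` (`0`-indexed). -/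
def NrMatrix (r : ℕ) : (Fin r ⊕ Fin (r - 1)) → Fin r → ZMod 2
  | Sum.inl i => fun k => if k = i then 1 else 0
  | Sum.inr j => fun k =>
      if j.val = 0 then (if k.val = 0 then 0 else 1)
      else if k.val = 0 ∨ k.val = 1 ∨ k.val = j.val + 1 then 1 else 0

/-- The matrix `[I_r | D]` of the matroid `L_r`; the columns of `D` are the all-ones
vector, `(1,1,0,…,0)ᵀ`, `(1,0,1,0,…,0)ᵀ` and `(0,1,1,0,…,0)ᵀ`. -/
def LrMatrix (r : ℕ) : (Fin r ⊕ Fin 4) → Fin r → ZMod 2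
  | Sum.inl i => fun k => if k = i then 1 else 0
  | Sum.inr j => fun k =>
      if j = 0 then 1
      else if j = 1 then (if k.val = 0 ∨ k.val = 1 then 1 else 0)
      else if j = 2 then (if k.val = 0 ∨ k.val = 2 then 1 else 0)
      else if k.val = 1 ∨ k.val = 2 then 1 else 0

/-- The matrix `[I_r | D]` of the matroid `J_r`; the columns of `D` are
`(0,1,1,…,1)ᵀ`, `(1,1,1,0,…,0)ᵀ`, `(1,1,0,1,0,…,0)ᵀ` and `(1,0,1,1,0,…,0)ᵀ`. -/
def JrMatrix (r : ℕ) : (Fin r ⊕ Fin 4) → Fin r → ZMod 2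
  | Sum.inl i => fun k => if k = i then 1 else 0
  | Sum.inr j => fun k =>
      if j = 0 then (if k.val = 0 then 0 else 1)
      else if j = 1 then (if k.val = 0 ∨ k.val = 1 ∨ k.val = 2 then 1 else 0)
      else if j = 2 then (if k.val = 0 ∨ k.val = 1 ∨ k.val = 3 then 1 else 0)
      else if k.val = 0 ∨ k.val = 2 ∨ k.val = 3 then 1 else 0

/-- A matrix over `GF(3)` whose vector matroid is `U_{2,4}`. -/
def U24Matrix : Fin 4 → Fin 2 → ZMod 3
  | 0 => fun k => if k = 0 then 1 else 0
  | 1 => fun k => if k = 1 then 1 else 0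
  | 2 => fun _ => 1
  | 3 => fun k => if k = 0 then 1 else 2

/-- A `GF(3)`-matrix representing the matroid obtained from a circuit
`{e, c_0, …, c_{n-1}}` (where `e` is the element `Sum.inl ()`) by 2-summing a copy
of `U_{2,4}` across each element `c_d` with `d ∈ D`.  For `d ∉ D` the element
`Sum.inr (d, 0)` is `c_d`, and for `d ∈ D` the elements `Sum.inr (d, j)`,
`j = 0, 1, 2`, are the three elements of the copy of `U_{2,4}` other than its
basepoint. -/
def thetaMatrix (n : ℕ) (D : Finset (Fin n)) :
    (Unit ⊕ Fin n × Fin 3) → (Fin n ⊕ Fin n) → ZMod 3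
  | Sum.inl _ => fun row => Sum.elim (fun _ => 1) (fun _ => 0) row
  | Sum.inr (d, j) => fun row =>
      let ed : (Fin n ⊕ Fin n) → ZMod 3 :=
        Sum.elim (fun i => if i = d then 1 else 0) (fun _ => 0)
      let wd : (Fin n ⊕ Fin n) → ZMod 3 :=
        Sum.elim (fun _ => 0) (fun i => if i = d then 1 else 0)
      if d ∈ D then
        (if j = 0 then wd row else if j = 1 then ed row + wd row else ed row - wd row)
      else ed row

/-- The ground set of the 2-sum construction: the circuit element `e`, the
untouched circuit elements `c_d` for `d ∉ D`, and three `U_{2,4}`-elements for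
each `d ∈ D`. -/
def thetaGround (n : ℕ) (D : Finset (Fin n)) : Set (Unit ⊕ Fin n × Fin 3) :=
  {x | ∀ d : Fin n, ∀ j : Fin 3, x = Sum.inr (d, j) → (j = 0 ∨ d ∈ D)}


section Aux

variable {M : Matroid α}

/-- Every finite dependent set contains a circuit. -/
lemma exists_circuit_subset_aux (M : Matroid α) :
    ∀ n (X : Set α), X.Finite → X.ncard ≤ n → M.Dep X → ∃ C, Circuit M C ∧ C ⊆ X := by
  intro n
  induction n with
  | zero =>
    intro X hfin hcard hdep
    have hX : X = ∅ := by
      rw [← Set.ncard_eq_zero hfin]; omega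
    subst hX
    exact absurd M.empty_indep hdep.not_indep
  | succ n ih =>
    intro X hfin hcard hdep
    by_cases h : ∀ D, M.Dep D → D ⊆ X → D = X
    · exact ⟨X, ⟨hdep, h⟩, subset_rfl⟩
    · push_neg at h
      obtain ⟨D, hD, hDX, hne⟩ := h
      have hss : D ⊂ X := hDX.ssubset_of_ne hne
      have hlt : D.ncard < X.ncard := Set.ncard_lt_ncard hss hfin
      obtain ⟨C, hC, hCD⟩ := ih D (hfin.subset hDX) (by omega) hD
      exact ⟨C, hC, hCD.trans hDX⟩

lemma exists_circuit_subset (M : Matroid α) {X : Set α} (hfin : X.Finite) (hdep : M.Dep X) :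
    ∃ C, Circuit M C ∧ C ⊆ X :=
  exists_circuit_subset_aux M X.ncard X hfin le_rfl hdep

lemma rank_eq_ncard_of_base {B : Set α} (hB : M.IsBase B) : rank M = B.ncard := by
  refine le_antisymm (Nat.sInf_le ⟨B, hB, rfl⟩) (le_csInf ⟨B.ncard, B, hB, rfl⟩ ?_)
  rintro n ⟨B', hB', rfl⟩
  exact (hB.ncard_eq_ncard_of_isBase hB').le

end Aux

/-- Corollary 4.2: a simple and cosimple `GF(q)`-representable
matroid with two distinct loose elements has rank at most `2q`. -/
theorem cosimple_two_loose {α : Type*} (q : ℕ) (F : Type) [Field F] [Fintype F]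
    (hq : Fintype.card F = q) (M : Matroid α) (hsimple : Simple M)
    (hcosimple : Simple M.dual) (hrep : Representable M F)
    (e f : α) (hef : e ≠ f) (he : Loose M e) (hf : Loose M f) :
    rank M ≤ 2 * q := by
  classical
  by_contra hcon
  push_neg at hcon
  obtain ⟨ι, v, hv⟩ := hrep
  have hconv : ∀ (s : Set α), LinearIndependent F (fun x : s => v x.1) ↔
      ∀ l ∈ Finsupp.supported F F s, Finsupp.linearCombination F v l = 0 → l = 0 :=
    fun s => linearIndepOn_iff
  have hq2 : 2 ≤ q := by
    have : 1 < Fintype.card F := Fintype.one_lt_card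
    omega
  -- a base avoiding both e and f
  have hefE : ({e, f} : Set α) ⊆ M✶.E := by
    rw [Matroid.dual_ground]
    exact Set.insert_subset he.1 (Set.singleton_subset_iff.2 hf.1)
  have hco : M✶.Indep {e, f} := by
    refine hcosimple e ?_ f ?_
    · rw [Matroid.dual_ground]; exact he.1
    · rw [Matroid.dual_ground]; exact hf.1
  obtain ⟨-, B, hB, hdisj⟩ := Matroid.dual_indep_iff_exists'.1 hco
  have heB : e ∉ B := Set.disjoint_left.1 hdisj (by simp)
  have hfB : f ∉ B := Set.disjoint_left.1 hdisj (by simp)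
  have hBE : B ⊆ M.E := hB.subset_ground
  have hBind : M.Indep B := hB.indep
  have hrk : rank M = B.ncard := rank_eq_ncard_of_base hB
  set r := B.ncard with hr_def
  have hr : 2 * q < r := by rw [← hrk]; exact hcon
  have hBfin : B.Finite := by
    by_contra hinf
    have : B.ncard = 0 := Set.Infinite.ncard hinf
    omega
  have hBli : ∀ l ∈ Finsupp.supported F F B, Finsupp.linearCombination F v l = 0 → l = 0 :=
    (hconv B).1 ((hv B hBE).1 hBind)
  -- dependence from an explicit linear relation
  have depOf : ∀ (l : α →₀ F) (X : Set α), X ⊆ M.E → ↑l.support ⊆ X → l ≠ 0 →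
      Finsupp.linearCombination F v l = 0 → M.Dep X := by
    intro l X hXE hsupp hne hz
    rw [Matroid.dep_iff]
    refine ⟨fun hind => hne ?_, hXE⟩
    exact (hconv X).1 ((hv X hXE).1 hind) l hsupp hz
  -- coefficient extraction for elements outside B
  have key : ∀ a ∈ M.E, a ∉ B → ∃ l : α →₀ F, ↑l.support ⊆ B ∧
      Finsupp.linearCombination F v l = v a := by
    intro a haE haB
    have hdep : M.Dep (insert a B) := hB.insert_dep ⟨haE, haB⟩
    have hnli : ¬ LinearIndependent F (fun x : (insert a B : Set α) => v x.1) :=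
      fun h => hdep.not_indep ((hv (insert a B) (Set.insert_subset haE hBE)).2 h)
    rw [hconv] at hnli
    push_neg at hnli
    obtain ⟨l0, hl0s, hl0z, hl0ne⟩ := hnli
    rw [Finsupp.mem_supported] at hl0s
    have ha0 : l0 a ≠ 0 := by
      intro h0
      refine hl0ne (hBli l0 ?_ hl0z)
      rw [Finsupp.mem_supported]
      intro x hx
      rcases hl0s hx with h | h
      · exact absurd (h ▸ hx) (fun hc => (Finsupp.mem_support_iff.1 hc) (h ▸ h0))
      · exact h
    refine ⟨(-(l0 a)⁻¹) • l0.erase a, ?_, ?_⟩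
    · intro x hx
      have hx1 : x ∈ (l0.erase a).support := Finset.mem_of_subset (Finsupp.support_smul) hx
      rw [Finsupp.support_erase, Finset.mem_erase] at hx1
      rcases hl0s hx1.2 with h | h
      · exact absurd h hx1.1
      · exact h
    · have herase : l0.erase a = l0 - Finsupp.single a (l0 a) := Finsupp.erase_eq_sub_single l0 a
      rw [map_smul, herase, map_sub, hl0z, Finsupp.linearCombination_single, zero_sub,
        smul_neg, neg_smul, neg_neg, smul_smul, inv_mul_cancel₀ ha0, one_smul]
  obtain ⟨le, hleB, hle⟩ := key e he.1 heB
  obtain ⟨lf, hlfB, hlf⟩ := key f hf.1 hfB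
  -- loose lower bound on support sizes
  have looseBound : ∀ (a : α) (l : α →₀ F), Loose M a → a ∉ B → ↑l.support ⊆ B →
      Finsupp.linearCombination F v l = v a → r ≤ l.support.card + 1 := by
    intro a l hloose haB hsupp hcomb
    have haS : a ∉ (↑l.support : Set α) := fun h => haB (hsupp h)
    have hdep : M.Dep (insert a ↑l.support) := by
      refine depOf (Finsupp.single a 1 - l) _
        (Set.insert_subset hloose.1 ((Set.Subset.trans hsupp hBE))) ?_ ?_ ?_
      · intro x hx
        have := Finsupp.support_sub (f := Finsupp.single a 1) (g := l) hx
        rw [Finset.mem_union] at this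
        rcases this with h | h
        · left
          have := Finsupp.support_single_subset h
          simpa using this
        · exact Or.inr h
      · intro h0
        have h0a := DFunLike.congr_fun h0 a
        rw [Finsupp.sub_apply, Finsupp.single_eq_same, Finsupp.coe_zero, Pi.zero_apply] at h0a
        have hla : l a = 0 := Finsupp.notMem_support_iff.1 (fun h => haS h)
        rw [hla, sub_zero] at h0a
        exact one_ne_zero h0a
      · rw [map_sub, Finsupp.linearCombination_single, one_smul, hcomb, sub_self]
    obtain ⟨C, hC, hCsub⟩ := exists_circuit_subset M
      ((l.support.finite_toSet).insert a) hdep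
    have haC : a ∈ C := by
      by_contra h
      have hCB : C ⊆ B := by
        intro x hx
        rcases hCsub hx with hxa | hxs
        · exact absurd (hxa ▸ hx) h
        · exact hsupp hxs
      exact hC.1.not_indep (hBind.subset hCB)
    have h1 : rank M ≤ C.ncard := hloose.2 C hC haC
    have h2 : C.ncard ≤ (insert a (↑l.support : Set α)).ncard :=
      Set.ncard_le_ncard hCsub ((l.support.finite_toSet).insert a)
    have h3 : (insert a (↑l.support : Set α)).ncard ≤ (↑l.support : Set α).ncard + 1 :=
      Set.ncard_insert_le a _
    rw [Set.ncard_coe_finset] at h3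
    omega
  have hleC : r ≤ le.support.card + 1 := looseBound e le he heB hleB hle
  have hlfC : r ≤ lf.support.card + 1 := looseBound f lf hf hfB hlfB hlf
  -- counting: the intersection of the two supports is large
  set Bf := hBfin.toFinset with hBf_def
  have hBfcard : Bf.card = r := by
    rw [hr_def, Set.ncard_eq_toFinset_card B hBfin]
  have hseB : le.support ⊆ Bf := by
    intro x hx; rw [Set.Finite.mem_toFinset]; exact hleB hx
  have hsfB : lf.support ⊆ Bf := by
    intro x hx; rw [Set.Finite.mem_toFinset]; exact hlfB hx
  have hunion : (le.support ∪ lf.support).card ≤ r := by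
    rw [← hBfcard]; exact Finset.card_le_card (Finset.union_subset hseB hsfB)
  set S := le.support ∩ lf.support with hS_def
  have hScard : r - 2 ≤ S.card := by
    have h := Finset.card_union_add_card_inter le.support lf.support
    rw [← hS_def] at h
    omega
  -- pigeonhole on the ratios
  have hmaps : ∀ b ∈ S, lf b * (le b)⁻¹ ∈ (Finset.univ.erase (0 : F)) := by
    intro b hb
    rw [Finset.mem_erase]
    refine ⟨mul_ne_zero ?_ (inv_ne_zero ?_), Finset.mem_univ _⟩
    · exact Finsupp.mem_support_iff.1 (Finset.mem_of_mem_inter_right hb)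
    · exact Finsupp.mem_support_iff.1 (Finset.mem_of_mem_inter_left hb)
  have hcount : (Finset.univ.erase (0 : F)).card * 2 < S.card := by
    rw [Finset.card_erase_of_mem (Finset.mem_univ _), Finset.card_univ, hq]
    omega
  obtain ⟨lam, hlam, hT⟩ :=
    Finset.exists_lt_card_fiber_of_mul_lt_card_of_maps_to hmaps hcount
  set T := S.filter (fun x => lf x * (le x)⁻¹ = lam) with hT_def
  -- the combination lf - lam • le vanishes on T
  set l1 := lf - lam • le with hl1_def
  have hl1T : ∀ b ∈ T, l1 b = 0 := by
    intro b hb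
    rw [hT_def, Finset.mem_filter] at hb
    have hle0 : le b ≠ 0 := Finsupp.mem_support_iff.1 (Finset.mem_of_mem_inter_left hb.1)
    have : lam * le b = lf b := by
      rw [← hb.2, mul_assoc, inv_mul_cancel₀ hle0, mul_one]
    rw [hl1_def, Finsupp.sub_apply, Finsupp.smul_apply, smul_eq_mul, this, sub_self]
  have hl1sub : l1.support ⊆ (le.support ∪ lf.support) \ T := by
    intro x hx
    rw [Finset.mem_sdiff]
    constructor
    · have := Finsupp.support_sub (f := lf) (g := lam • le) hx
      rw [Finset.mem_union] at this
      rcases this with h | h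
      · exact Finset.mem_union_right _ h
      · exact Finset.mem_union_left _ (Finset.mem_of_subset Finsupp.support_smul h)
    · intro hxT
      exact Finsupp.mem_support_iff.1 hx (hl1T x hxT)
  have hTsub : T ⊆ le.support ∪ lf.support := by
    intro x hx
    rw [hT_def, Finset.mem_filter] at hx
    exact Finset.mem_union_left _ (Finset.mem_of_mem_inter_left hx.1)
  have hl1card : l1.support.card + T.card ≤ r := by
    have h1 : l1.support.card ≤ ((le.support ∪ lf.support) \ T).card :=
      Finset.card_le_card hl1sub
    have h2 : ((le.support ∪ lf.support) \ T).card
        = (le.support ∪ lf.support).card - T.card := Finset.card_sdiff_of_subset hTsub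
    have h3 : T.card ≤ (le.support ∪ lf.support).card := Finset.card_le_card hTsub
    omega
  -- the final small dependent set
  have hl1f : l1 f = 0 := by
    have : f ∉ l1.support := by
      intro h
      have := (Finset.mem_sdiff.1 (hl1sub h)).1
      rw [Finset.mem_union] at this
      rcases this with h' | h'
      · exact hfB (hleB h')
      · exact hfB (hlfB h')
    exact Finsupp.notMem_support_iff.1 this
  have hl1comb : Finsupp.linearCombination F v l1 = v f - lam • v e := by
    rw [hl1_def, map_sub, map_smul, hle, hlf]
  set lrel := Finsupp.single f (1 : F) - Finsupp.single e lam - l1 with hlrel_def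
  have hlrelz : Finsupp.linearCombination F v lrel = 0 := by
    rw [hlrel_def, map_sub, map_sub, Finsupp.linearCombination_single,
      Finsupp.linearCombination_single, one_smul, hl1comb]
    abel
  have hlrelf : lrel f = 1 := by
    rw [hlrel_def, Finsupp.sub_apply, Finsupp.sub_apply, Finsupp.single_eq_same,
      Finsupp.single_eq_of_ne' hef, hl1f, sub_zero, sub_zero]
  set X := insert e (insert f (↑l1.support : Set α)) with hX_def
  have hl1E : (↑l1.support : Set α) ⊆ M.E := by
    intro x hx
    have := (Finset.mem_sdiff.1 (hl1sub hx)).1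
    rw [Finset.mem_union] at this
    rcases this with h | h
    · exact hBE (hleB h)
    · exact hBE (hlfB h)
  have hXE : X ⊆ M.E := Set.insert_subset he.1 (Set.insert_subset hf.1 hl1E)
  have hXdep : M.Dep X := by
    refine depOf lrel X hXE ?_ ?_ hlrelz
    · intro x hx
      have h1 := Finsupp.support_sub (f := Finsupp.single f (1:F) - Finsupp.single e lam)
        (g := l1) hx
      rw [Finset.mem_union] at h1
      rcases h1 with h | h
      · have h2 := Finsupp.support_sub (f := Finsupp.single f (1:F))
          (g := Finsupp.single e lam) h
        rw [Finset.mem_union] at h2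
        rcases h2 with h' | h'
        · have := Finsupp.support_single_subset h'
          rw [Finset.mem_singleton] at this
          exact Or.inr (Or.inl this)
        · have := Finsupp.support_single_subset h'
          rw [Finset.mem_singleton] at this
          exact Or.inl this
      · exact Or.inr (Or.inr h)
    · intro h0
      have h0f := DFunLike.congr_fun h0 f
      rw [hlrelf, Finsupp.coe_zero, Pi.zero_apply] at h0f
      exact one_ne_zero h0f
  have hXfin : X.Finite := ((l1.support.finite_toSet).insert f).insert e
  obtain ⟨C, hC, hCsub⟩ := exists_circuit_subset M hXfin hXdep
  have hCsmall : C.ncard ≤ l1.support.card + 2 := by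
    have h2 : C.ncard ≤ X.ncard := Set.ncard_le_ncard hCsub hXfin
    have h3 : X.ncard ≤ (insert f (↑l1.support : Set α)).ncard + 1 := Set.ncard_insert_le _ _
    have h4 : (insert f (↑l1.support : Set α)).ncard ≤ (↑l1.support : Set α).ncard + 1 :=
      Set.ncard_insert_le _ _
    rw [Set.ncard_coe_finset] at h4
    omega
  have hCef : e ∈ C ∨ f ∈ C := by
    by_contra h
    push_neg at h
    have hCB : C ⊆ B := by
      intro x hx
      rcases hCsub hx with hxe | hxr
      · exact absurd (hxe ▸ hx) h.1
      · rcases hxr with hxf | hxs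
        · exact absurd (hxf ▸ hx) h.2
        · rcases Finset.mem_sdiff.1 (hl1sub hxs) with ⟨hu, -⟩
          rw [Finset.mem_union] at hu
          rcases hu with h' | h'
          · exact hleB h'
          · exact hlfB h'
    exact hC.1.not_indep (hBind.subset hCB)
  have hrankC : r ≤ C.ncard := by
    rw [← hrk]
    rcases hCef with h | h
    · exact he.2 C hC h
    · exact hf.2 C hC h
  omega


end LoosePaper
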